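/- Let P : ℝ × ℝ → ℝ be differentiable, representing fore-aft acceleration a(ẋ, β) = ẋ⁺ − ẋ as a function of forward speed ẋ and touchdown angle β. Suppose there is a differentiable function β* with a(ẋ, β*(ẋ)) = 0, D_{ẋ}β* > 0, and D_β a(ẋ, β*(ẋ)) < 0 at a target speed ẋ*. Then there exists k_p > 0 such that the closed-loop return map ẋ ↦ ẋ + a(ẋ, β*(ẋ) + k_p(ẋ − ẋ*)) has ẋ* as a locally asymptotically stable fixed point, i.e., its derivative at ẋ* lies strictly in (−1, 1). -/

import Mathlib

/-- Proposition 3 (Raibert stepping controller): under the Raibert observations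
(neutral touchdown angle `β*` with `a(ẋ, β*(ẋ)) = 0`, monotonicity `Dβ* > 0`,
and `D_β a < 0` at the neutral angle), there is a gain `k_p > 0` such that the
closed-loop return map `ẋ ↦ ẋ + a(ẋ, β*(ẋ) + k_p(ẋ - ẋ*))` has `ẋ*` as a
locally asymptotically stable fixed point (derivative strictly in `(-1,1)`). -/
theorem stmt_4 (a : ℝ → ℝ → ℝ) (βs : ℝ → ℝ) (xs : ℝ)
    (ha : Differentiable ℝ (fun p : ℝ × ℝ => a p.1 p.2))
    (hβs : Differentiable ℝ βs)
    (hneutral : ∀ x : ℝ, a x (βs x) = 0)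
    (hmono : 0 < deriv βs xs)
    (hsens : deriv (fun b => a xs b) (βs xs) < 0) :
    ∃ kp : ℝ, 0 < kp ∧
      ∀ G : ℝ → ℝ, (∀ x : ℝ, G x = x + a x (βs x + kp * (x - xs))) →
        G xs = xs ∧ -1 < deriv G xs ∧ deriv G xs < 1 := by
  set F : ℝ × ℝ → ℝ := fun p => a p.1 p.2 with hFdef
  have hFd : DifferentiableAt ℝ F (xs, βs xs) := ha _
  set D := fderiv ℝ F (xs, βs xs) with hDdef
  have hD : HasFDerivAt F D (xs, βs xs) := hFd.hasFDerivAt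
  -- the partial derivative in β
  have hc : HasDerivAt (fun b => a xs b) (D (0, 1)) (βs xs) := by
    have h1 : HasDerivAt (fun b : ℝ => ((xs, b) : ℝ × ℝ)) ((0 : ℝ), (1 : ℝ)) (βs xs) :=
      HasDerivAt.prodMk (hasDerivAt_const _ _) (hasDerivAt_id _)
    have := hD.comp_hasDerivAt (βs xs) h1
    simpa [hFdef, Function.comp_def] using this
  have hcval : deriv (fun b => a xs b) (βs xs) = D (0, 1) := hc.deriv
  set c : ℝ := D (0, 1) with hcdef
  have hclt : c < 0 := hcval ▸ hsens
  have hcne : c ≠ 0 := ne_of_lt hclt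
  -- neutral curve: D (1, βs' xs) = 0
  have hβd : HasDerivAt βs (deriv βs xs) xs := (hβs xs).hasDerivAt
  have hneut : HasDerivAt (fun x => a x (βs x)) (D (1, deriv βs xs)) xs := by
    have h1 : HasDerivAt (fun x : ℝ => ((x, βs x) : ℝ × ℝ)) ((1 : ℝ), deriv βs xs) xs :=
      HasDerivAt.prodMk (hasDerivAt_id _) hβd
    have := hD.comp_hasDerivAt xs h1
    simpa [hFdef, Function.comp_def] using this
  have hzero : D (1, deriv βs xs) = 0 := by
    have h0 : HasDerivAt (fun x : ℝ => a x (βs x)) 0 xs := by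
      have : (fun x : ℝ => a x (βs x)) = fun _ => (0 : ℝ) := funext hneutral
      rw [this]; exact hasDerivAt_const _ _
    exact hneut.unique h0
  refine ⟨-c⁻¹, by simpa using neg_pos.mpr (inv_lt_zero.mpr hclt), ?_⟩
  intro G hG
  have hGfun : G = fun x => x + a x (βs x + (-c⁻¹) * (x - xs)) := funext hG
  have hfix : G xs = xs := by
    rw [hG xs]
    simp [hneutral xs]
  -- derivative of inner map
  have hinner : HasDerivAt (fun x : ℝ => ((x, βs x + (-c⁻¹) * (x - xs)) : ℝ × ℝ))
      ((1 : ℝ), deriv βs xs + -c⁻¹) xs := by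
    have h2 : HasDerivAt (fun x : ℝ => βs x + (-c⁻¹) * (x - xs))
        (deriv βs xs + -c⁻¹) xs := by
      have h3 : HasDerivAt (fun x : ℝ => (-c⁻¹) * (x - xs)) (-c⁻¹) xs := by
        simpa using (((hasDerivAt_id xs).sub_const xs).const_mul (-c⁻¹))
      exact hβd.add h3
    exact HasDerivAt.prodMk (hasDerivAt_id _) h2
  have hcomp : HasDerivAt (fun x => a x (βs x + (-c⁻¹) * (x - xs)))
      (D (1, deriv βs xs + -c⁻¹)) xs := by
    have h1 : HasFDerivAt F D (xs, βs xs + (-c⁻¹) * (xs - xs)) := by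
      simpa using hD
    have := h1.comp_hasDerivAt xs hinner
    simpa [hFdef, Function.comp_def] using this
  have hDval : D (1, deriv βs xs + -c⁻¹) = -1 := by
    have : ((1 : ℝ), deriv βs xs + -c⁻¹) = (1, deriv βs xs) + (-c⁻¹) • ((0 : ℝ), (1 : ℝ)) := by
      simp [Prod.ext_iff]
    rw [this, map_add, map_smul, hzero, ← hcdef]
    field_simp
    simp [smul_eq_mul, hcne]
  have hG' : HasDerivAt G 0 xs := by
    rw [hGfun]
    have := (hasDerivAt_id xs).add hcomp
    rw [hDval] at this
    simpa [Pi.add_def] using this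
  rw [hG'.deriv]
  exact ⟨hfix, by norm_num, by norm_num⟩
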